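/- Deleting a constraint of the form [[D,0],[0,0]] • X = 0 with D ≻ 0 and restricting all other constraints to the complementary block preserves the optimal value: inf { C • X : A₁ • X = 0, A_i • X = b_i (i ≥ 2), X ⪰ 0 } equals inf { C₂₂ • Y : (A_i)₂₂ • Y = b_i (i ≥ 2), Y ⪰ 0 }, where subscript ₂₂ denotes the bottom-right (n−k)×(n−k) block. -/

import Mathlib

open Matrix

open scoped MatrixOrder in
/-- A real PSD matrix with zero trace is zero. -/
lemma psd_trace_zero_eq_zero {n : Type*} [Fintype n] [DecidableEq n]
    {M : Matrix n n ℝ} (hM : M.PosSemidef) (h : M.trace = 0) : M = 0 := by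
  obtain ⟨B, rfl⟩ := CStarAlgebra.nonneg_iff_eq_star_mul_self.mp hM.nonneg
  have hB : B = 0 := by
    have h' : ∑ i, ∑ j, B j i * B j i = 0 := by
      simpa [Matrix.trace, Matrix.diag, Matrix.mul_apply, Matrix.conjTranspose_apply] using h
    ext i j
    have h1 := (Finset.sum_eq_zero_iff_of_nonneg
      (fun j _ => Finset.sum_nonneg fun i _ => mul_self_nonneg _)).mp h' j (Finset.mem_univ _)
    have h2 := (Finset.sum_eq_zero_iff_of_nonneg
      (fun i _ => mul_self_nonneg (B i j))).mp h1 i (Finset.mem_univ _)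
    exact mul_self_eq_zero.mp h2
  simp [hB]

open scoped MatrixOrder in
/-- If `D` is positive definite and `M` is PSD with `trace (D * M) = 0`, then `M = 0`. -/
lemma psd_trace_posDef_mul_eq_zero {n : Type*} [Fintype n] [DecidableEq n]
    {D M : Matrix n n ℝ} (hD : D.PosDef) (hM : M.PosSemidef)
    (h : (D * M).trace = 0) : M = 0 := by
  set S := CFC.sqrt D with hSdef
  have hS2 : S * S = D := CFC.sqrt_mul_sqrt_self D hD.posSemidef.nonneg
  have hSH : Sᴴ = S := (CFC.sqrt_nonneg D).posSemidef.1
  have hSMS : (S * M * S).PosSemidef := by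
    have := hM.mul_mul_conjTranspose_same S
    rwa [hSH] at this
  have htr : (S * M * S).trace = 0 := by
    rw [trace_mul_cycle, hS2]; exact h
  have hz : S * M * S = 0 := psd_trace_zero_eq_zero hSMS htr
  have hdet : IsUnit S.det := by
    have : S.det * S.det = D.det := by rw [← det_mul, hS2]
    have hDdet : D.det ≠ 0 := ne_of_gt hD.det_pos
    refine isUnit_iff_ne_zero.mpr fun hc => hDdet ?_
    rw [← this, hc, zero_mul]
  have hMS : M * S = 0 := by
    have h1 : S * (M * S) = 0 := by rw [← mul_assoc]; exact hz
    have h2 : M * S = S⁻¹ * S * (M * S) := by rw [nonsing_inv_mul _ hdet, one_mul]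
    rw [mul_assoc, h1, mul_zero] at h2
    exact h2
  have h3 : M = M * S * S⁻¹ := by rw [mul_assoc, mul_nonsing_inv _ hdet, mul_one]
  rw [h3, hMS, zero_mul]

/-- A real PSD matrix with a zero diagonal entry has a zero row at that entry. -/
lemma psd_row_eq_zero_of_diag_zero {n : Type*} [Fintype n] [DecidableEq n]
    {M : Matrix n n ℝ} (hM : M.PosSemidef) {a : n} (ha : M a a = 0) (b : n) :
    M a b = 0 := by
  rcases eq_or_ne a b with rfl | hab
  · exact ha
  have hsym : M b a = M a b := by
    have := congrFun (congrFun hM.1 a) b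
    simpa [Matrix.conjTranspose_apply] using this
  have key : ∀ t : ℝ, 0 ≤ 2 * t * M a b + M b b := by
    intro t
    have hq := hM.dotProduct_mulVec_nonneg (t • (Pi.single a 1 : n → ℝ) + Pi.single b 1)
    have hexp : star (t • (Pi.single a 1 : n → ℝ) + Pi.single b 1) ⬝ᵥ
        (M *ᵥ (t • (Pi.single a 1 : n → ℝ) + Pi.single b 1)) =
        t * t * M a a + t * M a b + t * M b a + M b b := by
      simp [mulVec_add, mulVec_smul, dotProduct_add, add_dotProduct, dotProduct_smul,
        smul_dotProduct, mulVec_single, dotProduct_single, single_dotProduct, star_trivial]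
      ring
    rw [hexp, ha, hsym] at hq
    calc (0:ℝ) ≤ t * t * 0 + t * M a b + t * M a b + M b b := hq
    _ = 2 * t * M a b + M b b := by ring
  by_contra hc
  have ht := key (-(M b b + 1) / (2 * M a b))
  have h2c : 2 * M a b ≠ 0 := by
    intro h; exact hc (by linarith [h])
  have heq : 2 * (-(M b b + 1) / (2 * M a b)) * M a b + M b b = -1 := by
    field_simp
    ring
  linarith [ht, heq]

lemma trace_fromBlocks' {a b : Type*} [Fintype a] [Fintype b]
    (A : Matrix a a ℝ) (B : Matrix a b ℝ) (C : Matrix b a ℝ) (D : Matrix b b ℝ) :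
    (fromBlocks A B C D).trace = A.trace + D.trace := by
  simp [Matrix.trace, Matrix.diag, Fintype.sum_sum_type, fromBlocks]

lemma trace_mul_blocks {k l : Type*} [Fintype k] [Fintype l] [DecidableEq k] [DecidableEq l]
    (A : Matrix (k ⊕ l) (k ⊕ l) ℝ) (Y : Matrix l l ℝ) :
    (A * fromBlocks 0 0 0 Y).trace = (A.toBlocks₂₂ * Y).trace := by
  conv_lhs => rw [← fromBlocks_toBlocks A]
  rw [fromBlocks_multiply]
  simp [trace_fromBlocks']

lemma posSemidef_fromBlocks_zero {k l : Type*} [Fintype k] [Fintype l]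
    {Y : Matrix l l ℝ} (hY : Y.PosSemidef) :
    (fromBlocks (0 : Matrix k k ℝ) 0 0 Y).PosSemidef := by
  refine posSemidef_iff_dotProduct_mulVec.mpr ⟨?_, ?_⟩
  · unfold IsHermitian
    rw [fromBlocks_conjTranspose]
    simp only [conjTranspose_zero]
    rw [show Yᴴ = Y from hY.1]
  · intro v
    have hv : v = Sum.elim (v ∘ Sum.inl) (v ∘ Sum.inr) := (Sum.elim_comp_inl_inr v).symm
    rw [hv, fromBlocks_mulVec]
    simp only [zero_mulVec, add_zero, zero_add, Sum.elim_comp_inl_inr]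
    have : star v ⬝ᵥ Sum.elim (0 : k → ℝ) (Y *ᵥ (v ∘ Sum.inr)) =
        star (v ∘ Sum.inr) ⬝ᵥ (Y *ᵥ (v ∘ Sum.inr)) := by
      rw [hv]
      rw [show star (Sum.elim (v ∘ Sum.inl) (v ∘ Sum.inr)) =
        Sum.elim (star (v ∘ Sum.inl)) (star (v ∘ Sum.inr)) from rfl]
      rw [sumElim_dotProduct_sumElim, dotProduct_zero, zero_add]
      simp [Sum.elim_comp_inl_inr]
    rw [this]
    exact hY.dotProduct_mulVec_nonneg _

theorem facial_reduction_step_optimal_value {k l m : ℕ}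
    (D : Matrix (Fin k) (Fin k) ℝ) (hD : D.PosDef)
    (C : Matrix (Fin k ⊕ Fin l) (Fin k ⊕ Fin l) ℝ) (hC : C.IsHermitian)
    (A : Fin m → Matrix (Fin k ⊕ Fin l) (Fin k ⊕ Fin l) ℝ)
    (hA : ∀ i, (A i).IsHermitian) (b : Fin m → ℝ) :
    sInf {v : EReal | ∃ X : Matrix (Fin k ⊕ Fin l) (Fin k ⊕ Fin l) ℝ,
        X.PosSemidef ∧ ((fromBlocks D 0 0 0) * X).trace = 0 ∧
        (∀ i, ((A i) * X).trace = b i) ∧ v = ((C * X).trace : ℝ)} =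
    sInf {v : EReal | ∃ Y : Matrix (Fin l) (Fin l) ℝ,
        Y.PosSemidef ∧ (∀ i, ((A i).toBlocks₂₂ * Y).trace = b i) ∧
        v = ((C.toBlocks₂₂ * Y).trace : ℝ)} := by
  congr 1
  ext v
  constructor
  · rintro ⟨X, hX, htr, hAi, rfl⟩
    -- X₁₁ = 0
    have hX11psd : (X.toBlocks₁₁).PosSemidef := hX.submatrix Sum.inl
    have htr' : (D * X.toBlocks₁₁).trace = 0 := by
      have : ((fromBlocks D 0 0 0) * X).trace = (D * X.toBlocks₁₁).trace := by
        conv_lhs => rw [← fromBlocks_toBlocks X]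
        rw [fromBlocks_multiply]
        simp [trace_fromBlocks']
      rw [← this, htr]
    have hX11 : X.toBlocks₁₁ = 0 := psd_trace_posDef_mul_eq_zero hD hX11psd htr'
    have hXblocks : X = fromBlocks 0 0 0 X.toBlocks₂₂ := by
      have hdiag : ∀ i : Fin k, X (Sum.inl i) (Sum.inl i) = 0 := fun i =>
        congrFun (congrFun hX11 i) i
      have hrow : ∀ (i : Fin k) (b' : Fin k ⊕ Fin l), X (Sum.inl i) b' = 0 := fun i =>
        psd_row_eq_zero_of_diag_zero hX (hdiag i)
      have hcol : ∀ (b' : Fin k ⊕ Fin l) (i : Fin k), X b' (Sum.inl i) = 0 := by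
        intro b' i
        have := congrFun (congrFun hX.1 (Sum.inl i)) b'
        rw [Matrix.conjTranspose_apply] at this
        simp only [star_trivial] at this
        rw [this]; exact hrow i b'
      ext a' b'
      rcases a' with i | i <;> rcases b' with j | j <;>
        simp [fromBlocks, toBlocks₂₂, hrow, hcol]
    refine ⟨X.toBlocks₂₂, hX.submatrix Sum.inr, fun i => ?_, ?_⟩
    · rw [← trace_mul_blocks (A i), ← hXblocks]; exact hAi i
    · rw [← trace_mul_blocks C, ← hXblocks]
  · rintro ⟨Y, hY, hAi, rfl⟩
    refine ⟨fromBlocks 0 0 0 Y, posSemidef_fromBlocks_zero hY, ?_, fun i => ?_, ?_⟩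
    · rw [fromBlocks_multiply]
      simp [trace_fromBlocks']
    · rw [trace_mul_blocks]; exact hAi i
    · rw [trace_mul_blocks]
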